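/- With Λ and notation as above, for any two distinct x̂, ŷ ∈ Λ and any δ ∈ (0,1], Φ*_{(σ,x̂,ŷ)}(δ) = 1. -/

import Mathlib

open Filter

noncomputable def Phi {α : Type*} (d : α → α → ℝ) (f : α → α) (x y : α) (δ : ℝ) : ℝ :=
  liminf (fun n : ℕ =>
    (((Finset.range (n+1)).filter (fun k => d (f^[k] x) (f^[k] y) < δ)).card : ℝ) / n) atTop

noncomputable def PhiStar {α : Type*} (d : α → α → ℝ) (f : α → α) (x y : α) (δ : ℝ) : ℝ :=
  limsup (fun n : ℕ =>
    (((Finset.range (n+1)).filter (fun k => d (f^[k] x) (f^[k] y) < δ)).card : ℝ) / n) atTop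

open Classical in
noncomputable def shiftDist (x y : ℕ → Bool) : ℝ :=
  if x = y then 0 else (2:ℝ)⁻¹ ^ (sInf {j | x j ≠ y j})

def shift (x : ℕ → Bool) : ℕ → Bool := fun n => x (n+1)

noncomputable def diamX (X : Type*) [MetricSpace X] : ℝ := Metric.diam (Set.univ : Set X)

/-- Auxiliary: iterates of the shift. -/
lemma shift_iterate (k : ℕ) (x : ℕ → Bool) (n : ℕ) : shift^[k] x n = x (n + k) := by
  induction k generalizing x n with
  | zero => rfl
  | succ k ih =>
    rw [Function.iterate_succ_apply, ih]
    simp [shift, Nat.add_assoc]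

/-- Auxiliary: if two sequences agree on the first `m` coordinates and `2⁻¹ ^ m < δ`,
then their distance is `< δ`. -/
lemma shiftDist_lt (x y : ℕ → Bool) (m : ℕ) (δ : ℝ) (hδ : 0 < δ)
    (hm : (2:ℝ)⁻¹ ^ m < δ) (h : ∀ j, j < m → x j = y j) : shiftDist x y < δ := by
  unfold shiftDist
  split_ifs with he
  · exact hδ
  · have hne : {j | x j ≠ y j}.Nonempty := by
      obtain ⟨j, hj⟩ := Function.ne_iff.mp he
      exact ⟨j, hj⟩
    have hmem := Nat.sInf_mem hne
    have hge : m ≤ sInf {j | x j ≠ y j} := by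
      by_contra h'
      push_neg at h'
      exact hmem (h _ h')
    calc (2:ℝ)⁻¹ ^ sInf {j | x j ≠ y j} ≤ (2:ℝ)⁻¹ ^ m :=
        pow_le_pow_of_le_one (by norm_num) (by norm_num) hge
      _ < δ := hm

/-- Auxiliary: triangular numbers. -/
def Tg (t : ℕ) : ℕ := t * (t + 1) / 2

lemma Tg_ge (t : ℕ) (ht : 1 ≤ t) : t ≤ Tg t := by
  have h : t * 2 ≤ t * (t + 1) := Nat.mul_le_mul_left t (by omega)
  exact (Nat.le_div_iff_mul_le (by norm_num)).2 h

theorem stmt16 (a : ℕ → ℕ) (hpos : ∀ i, 1 ≤ i → 0 < a i)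
    (hmono : ∀ i j, 1 ≤ i → i < j → a i < a j)
    (b : ℕ → ℕ) (hb : ∀ n, b n = ∑ i ∈ Finset.Icc 1 n, a i)
    (hab : Filter.Tendsto (fun n : ℕ => ((b n + n : ℕ) : ℝ) / (a (n+1) : ℝ)) atTop (nhds 0))
    (L : (ℕ → Bool) → (ℕ → Bool))
    (hL : ∀ x : ℕ → Bool, ∀ n : ℕ, 1 ≤ n → ∀ j, j < n → L x (n*(n-1)/2 + j) = x j)
    (N : (ℕ → Bool) → (ℕ → Bool))
    (hN : ∀ z : ℕ → Bool, ∀ i : ℕ, 1 ≤ i → ∀ p : ℕ, b (i-1) ≤ p → p < b i →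
      N z p = if (∃ t ∈ Finset.Icc 1 i, t*(t+1)/2 = i) then false
        else z (i - ((Finset.Icc 1 i).filter (fun t => t*(t+1)/2 ≤ i)).card - 1)) :
    ∀ xh ∈ Set.range (fun x => N (L x)), ∀ yh ∈ Set.range (fun x => N (L x)), xh ≠ yh →
      ∀ δ : ℝ, 0 < δ → δ ≤ 1 → PhiStar shiftDist shift xh yh δ = 1 := by
  rintro xh ⟨x, rfl⟩ yh ⟨y, rfl⟩ hxy δ hδ0 hδ1
  obtain ⟨m₀, hm₀⟩ := exists_pow_lt_of_lt_one hδ0 (by norm_num : (2:ℝ)⁻¹ < 1)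
  -- basic facts
  have hba : ∀ i, 1 ≤ i → b i = b (i-1) + a i := by
    intro i hi
    obtain ⟨j, rfl⟩ : ∃ j, i = j + 1 := ⟨i - 1, by omega⟩
    rw [hb, hb, Finset.sum_Icc_succ_top (by omega)]
    simp
  have hai : ∀ i, 1 ≤ i → i ≤ a i := by
    intro i hi
    induction i with
    | zero => omega
    | succ n ih =>
      rcases Nat.eq_or_lt_of_le hi with h | h
      · have hn0 : n = 0 := by omega
        subst hn0
        simpa using Nat.succ_le_of_lt (hpos 1 le_rfl)
      · have h1 : 1 ≤ n := by omega
        have h2 := ih h1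
        have h3 := hmono n (n+1) h1 (by omega)
        omega
  have hab' : ∀ i, 1 ≤ i → a i ≤ b i := fun i hi => by rw [hba i hi]; omega
  have hzero : ∀ z : ℕ → Bool, ∀ t, 1 ≤ t → ∀ p, b (Tg t - 1) ≤ p → p < b (Tg t) →
      N z p = false := by
    intro z t ht p hp1 hp2
    rw [hN z (Tg t) (le_trans ht (Tg_ge t ht)) p hp1 hp2,
      if_pos ⟨t, Finset.mem_Icc.mpr ⟨ht, Tg_ge t ht⟩, rfl⟩]
  -- the sequence whose limsup we compute
  simp only [PhiStar]
  set u : ℕ → ℝ := fun n =>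
    (((Finset.range (n+1)).filter
      (fun k => shiftDist (shift^[k] (N (L x))) (shift^[k] (N (L y))) < δ)).card : ℝ) / n
    with hu
  -- counting lemma
  have hcard : ∀ t, 1 ≤ t → m₀ < a (Tg t) →
      (a (Tg t) - m₀ : ℕ) ≤ ((Finset.range (b (Tg t) - 1 + 1)).filter
        (fun k => shiftDist (shift^[k] (N (L x))) (shift^[k] (N (L y))) < δ)).card := by
    intro t ht hm
    have hi1 : 1 ≤ Tg t := le_trans ht (Tg_ge t ht)
    have hbi : b (Tg t) = b (Tg t - 1) + a (Tg t) := hba _ hi1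
    have hsub : Finset.Ico (b (Tg t - 1)) (b (Tg t) - m₀) ⊆
        (Finset.range (b (Tg t) - 1 + 1)).filter
          (fun k => shiftDist (shift^[k] (N (L x))) (shift^[k] (N (L y))) < δ) := by
      intro k hk
      rw [Finset.mem_Ico] at hk
      rw [Finset.mem_filter, Finset.mem_range]
      refine ⟨by omega, ?_⟩
      apply shiftDist_lt _ _ m₀ δ hδ0 hm₀
      intro j hj
      rw [shift_iterate, shift_iterate,
        hzero (L x) t ht (j + k) (by omega) (by omega),
        hzero (L y) t ht (j + k) (by omega) (by omega)]
    calc a (Tg t) - m₀ = (Finset.Ico (b (Tg t - 1)) (b (Tg t) - m₀)).card := by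
          rw [Nat.card_Ico]; omega
      _ ≤ _ := Finset.card_le_card hsub
  -- lower estimate on u along the subsequence
  have hune : ∀ t, 1 ≤ t → m₀ + 2 ≤ a (Tg t) →
      ((a (Tg t) : ℝ) - m₀) / ((b (Tg t) : ℝ) - 1) ≤ u (b (Tg t) - 1) := by
    intro t ht hm
    have hi1 : 1 ≤ Tg t := le_trans ht (Tg_ge t ht)
    have hbi : b (Tg t) = b (Tg t - 1) + a (Tg t) := hba _ hi1
    have h2 : 2 ≤ b (Tg t) := by omega
    have hc := hcard t ht (by omega)
    calc ((a (Tg t) : ℝ) - m₀) / ((b (Tg t) : ℝ) - 1)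
        = ((a (Tg t) - m₀ : ℕ) : ℝ) / ((b (Tg t) - 1 : ℕ) : ℝ) := by
          rw [Nat.cast_sub (by omega : m₀ ≤ a (Tg t)), Nat.cast_sub (by omega : 1 ≤ b (Tg t))]
          norm_num
      _ ≤ (((Finset.range (b (Tg t) - 1 + 1)).filter
            (fun k => shiftDist (shift^[k] (N (L x))) (shift^[k] (N (L y))) < δ)).card : ℝ)
            / ((b (Tg t) - 1 : ℕ) : ℝ) := by
          gcongr

      _ = u (b (Tg t) - 1) := by simp only [hu]
  -- tendsto preliminaries
  have hA : Tendsto (fun t => (a (Tg t) : ℝ)) atTop atTop := by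
    apply tendsto_atTop_mono (f := fun t : ℕ => (t : ℝ)) ?_ tendsto_natCast_atTop_atTop
    intro t
    show (t : ℝ) ≤ (a (Tg t) : ℝ)
    rcases Nat.eq_zero_or_pos t with h | h
    · subst h; simp
    · exact_mod_cast le_trans (Tg_ge t h) (hai _ (le_trans h (Tg_ge t h)))
  have htT : Tendsto (fun t => Tg t - 1) atTop atTop := by
    apply tendsto_atTop_mono (f := fun t : ℕ => t - 1) ?_ (tendsto_sub_atTop_nat 1)
    intro t
    show t - 1 ≤ Tg t - 1
    rcases Nat.eq_zero_or_pos t with h | h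
    · subst h; omega
    · have := Tg_ge t h; omega
  have hBA : Tendsto (fun t => (b (Tg t - 1) : ℝ) / (a (Tg t) : ℝ)) atTop (nhds 0) := by
    have h1 := hab.comp htT
    apply squeeze_zero' (g := fun t => ((b (Tg t - 1) + (Tg t - 1) : ℕ) : ℝ)
      / (a ((Tg t - 1) + 1) : ℝ))
    · exact Eventually.of_forall fun t => by positivity
    · filter_upwards [eventually_ge_atTop 1] with t ht
      have hi1 : 1 ≤ Tg t := le_trans ht (Tg_ge t ht)
      rw [show Tg t - 1 + 1 = Tg t by omega]
      gcongr
      omega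
    · simpa [Function.comp_def] using h1
  have hm0A : Tendsto (fun t => (m₀ : ℝ) / (a (Tg t) : ℝ)) atTop (nhds 0) :=
    Tendsto.div_atTop tendsto_const_nhds hA
  have h1A : Tendsto (fun t => (1 : ℝ) / (a (Tg t) : ℝ)) atTop (nhds 0) :=
    Tendsto.div_atTop tendsto_const_nhds hA
  -- the ratio tends to 1
  have hr : Tendsto (fun t => ((a (Tg t) : ℝ) - m₀) / ((b (Tg t) : ℝ) - 1)) atTop (nhds 1) := by
    have hnum : Tendsto (fun t => 1 - (m₀ : ℝ) / (a (Tg t) : ℝ)) atTop (nhds 1) := by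
      simpa using tendsto_const_nhds.sub hm0A
    have hden : Tendsto (fun t => (b (Tg t - 1) : ℝ) / (a (Tg t) : ℝ) + 1
        - 1 / (a (Tg t) : ℝ)) atTop (nhds 1) := by
      simpa using (hBA.add (tendsto_const_nhds (x := (1:ℝ)))).sub h1A
    have hdiv := hnum.div hden (by norm_num)
    rw [show (1:ℝ)/1 = 1 by norm_num] at hdiv
    apply hdiv.congr'
    filter_upwards [eventually_ge_atTop 1, hA.eventually_ge_atTop 2] with t ht hA2
    have hi1 : 1 ≤ Tg t := le_trans ht (Tg_ge t ht)
    have hbi : b (Tg t) = b (Tg t - 1) + a (Tg t) := hba _ hi1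
    have hB0 : (0:ℝ) ≤ (b (Tg t - 1) : ℝ) := Nat.cast_nonneg _
    have hA0 : (a (Tg t) : ℝ) ≠ 0 := by linarith
    have hden0 : (b (Tg t - 1) : ℝ) + (a (Tg t) : ℝ) - 1 ≠ 0 := by
      have : (0:ℝ) < (b (Tg t - 1) : ℝ) + (a (Tg t) : ℝ) - 1 := by linarith
      linarith
    have hcast : (b (Tg t) : ℝ) = (b (Tg t - 1) : ℝ) + (a (Tg t) : ℝ) := by
      exact_mod_cast hbi
    simp only [Pi.div_apply]
    rw [hcast]
    field_simp
  -- frequently, u n is at least any c < 1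
  have hbig : ∀ᶠ t in atTop, (m₀ + 2 : ℕ) ≤ a (Tg t) ∧ 1 ≤ t := by
    filter_upwards [eventually_ge_atTop (m₀ + 2)] with t ht
    have h1 : 1 ≤ t := by omega
    exact ⟨le_trans ht (le_trans (Tg_ge t h1) (hai _ (le_trans h1 (Tg_ge t h1)))), h1⟩
  have hfreq : ∀ c : ℝ, c < 1 → ∃ᶠ n in atTop, c ≤ u n := by
    intro c hc
    rw [frequently_atTop]
    intro M
    have hev : ∀ᶠ t in atTop, c ≤ ((a (Tg t) : ℝ) - m₀) / ((b (Tg t) : ℝ) - 1) :=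
      hr.eventually_const_le hc
    obtain ⟨t, ⟨hrc, hbig1, ht1⟩, htM⟩ :=
      ((hev.and hbig).and (eventually_ge_atTop (M + 1))).exists
    refine ⟨b (Tg t) - 1, ?_, le_trans hrc (hune t ht1 hbig1)⟩
    have h1 := Tg_ge t ht1
    have h2 := hai (Tg t) (le_trans ht1 h1)
    have h3 := hab' (Tg t) (le_trans ht1 h1)
    omega
  -- upper bound
  have hub : ∀ n, u n ≤ ((n : ℝ) + 1) / n := by
    intro n
    rcases Nat.eq_zero_or_pos n with h | h
    · subst h; simp [hu]
    · have hn : (0:ℝ) < n := by exact_mod_cast h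
      simp only [hu]
      gcongr
      have := Finset.card_filter_le (Finset.range (n+1))
        (fun k => shiftDist (shift^[k] (N (L x))) (shift^[k] (N (L y))) < δ)
      rw [Finset.card_range] at this
      exact_mod_cast this
  have hv : Tendsto (fun n : ℕ => ((n : ℝ) + 1) / n) atTop (nhds 1) := by
    have h1 : Tendsto (fun n : ℕ => 1 + 1 / (n : ℝ)) atTop (nhds 1) := by
      simpa using (tendsto_const_nhds (x := (1:ℝ))).add tendsto_one_div_atTop_nhds_zero_nat
    apply h1.congr'
    filter_upwards [eventually_ge_atTop 1] with n hn
    have hn0 : (n : ℝ) ≠ 0 := Nat.cast_ne_zero.2 (by omega)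
    field_simp
  have hbdd : IsBoundedUnder (· ≤ ·) atTop u := by
    refine isBoundedUnder_of ⟨2, fun n => le_trans (hub n) ?_⟩
    rcases Nat.eq_zero_or_pos n with h | h
    · subst h; norm_num
    · have hn : (0:ℝ) < n := by exact_mod_cast h
      rw [div_le_iff₀ hn]
      have : (1:ℝ) ≤ n := by exact_mod_cast h
      linarith
  have hcob : IsCoboundedUnder (· ≤ ·) atTop u :=
    IsCoboundedUnder.of_frequently_ge (Frequently.of_forall fun n => by
      simp only [hu]; positivity)
  have hle : limsup u atTop ≤ 1 := by
    have h := limsup_le_limsup (Eventually.of_forall hub) hcob hv.isBoundedUnder_le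
    rwa [hv.limsup_eq] at h
  have hge : 1 ≤ limsup u atTop := by
    by_contra h
    push_neg at h
    obtain ⟨c, hc1, hc2⟩ := exists_between h
    have := le_limsup_of_frequently_le (hfreq c hc2) hbdd
    linarith
  exact le_antisymm hle hge
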